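/- (Uniqueness of the recessive solution.) Let ν ∈ ℝ and let Z̃ and Z̃′ be two recessive solutions of system (S_ν). Then there exists an invertible matrix K ∈ ℂ^{n×n} such that Z̃′ₖ = Z̃ₖ K for all k ∈ ℕ; i.e., the recessive solution of (S_ν) is determined uniquely up to a right multiple by a constant nonsingular n×n matrix. -/

import Mathlib

open Matrix Filter
open scoped ComplexOrder

noncomputable def Jmat (n : ℕ) : Matrix (Fin n ⊕ Fin n) (Fin n ⊕ Fin n) ℂ :=
  Matrix.fromBlocks 0 1 (-1) 0

noncomputable def PsiMat {n : ℕ} (W : ℕ → Matrix (Fin n) (Fin n) ℂ) (k : ℕ) :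
    Matrix (Fin n ⊕ Fin n) (Fin n ⊕ Fin n) ℂ :=
  Matrix.fromBlocks (W k) 0 0 0

noncomputable def Vmat {n : ℕ} (S : ℕ → Matrix (Fin n ⊕ Fin n) (Fin n ⊕ Fin n) ℂ)
    (W : ℕ → Matrix (Fin n) (Fin n) ℂ) (k : ℕ) :
    Matrix (Fin n ⊕ Fin n) (Fin n ⊕ Fin n) ℂ :=
  -(Jmat n * PsiMat W k * S k)

/-- `Z` is a conjoined basis of system `(S_ν)`: a `2n×n` matrix solution with
`rank Zₖ = n` and `Zₖ* 𝒥 Zₖ = 0` for all `k`. -/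
def IsConjoinedBasis {n : ℕ} (S : ℕ → Matrix (Fin n ⊕ Fin n) (Fin n ⊕ Fin n) ℂ)
    (W : ℕ → Matrix (Fin n) (Fin n) ℂ) (nu : ℝ)
    (Z : ℕ → Matrix (Fin n ⊕ Fin n) (Fin n) ℂ) : Prop :=
  (∀ k, Z k = (S k + (nu : ℂ) • Vmat S W k) * Z (k + 1)) ∧
    ∀ k, (Z k).rank = n ∧ (Z k)ᴴ * Jmat n * Z k = 0

/-- `Z̃ = (X̃; Ũ)` is a recessive solution of `(S_ν)`: a conjoined basis such that for all
sufficiently large `k` the matrix `X̃ₖ` is invertible with `−X̃ₖ⁻¹ ℬₖ (X̃_{k+1}*)⁻¹ ≥ 0`,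
and for every conjoined basis `Z = (X; U)` normalized with `Z̃` (i.e. `Zₖ* 𝒥 Z̃ₖ = I`),
the matrix `Xₖ` is invertible for all large `k` and `Xₖ⁻¹ X̃ₖ → 0` as `k → ∞`. -/
def IsRecessive {n : ℕ} (S : ℕ → Matrix (Fin n ⊕ Fin n) (Fin n ⊕ Fin n) ℂ)
    (W B : ℕ → Matrix (Fin n) (Fin n) ℂ) (nu : ℝ)
    (Xt Ut : ℕ → Matrix (Fin n) (Fin n) ℂ) : Prop :=
  IsConjoinedBasis S W nu (fun k => Matrix.fromRows (Xt k) (Ut k)) ∧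
    (∃ k₀ : ℕ, ∀ k, k₀ ≤ k →
      IsUnit (Xt k) ∧ (-((Xt k)⁻¹ * B k * ((Xt (k + 1))ᴴ)⁻¹)).PosSemidef) ∧
    ∀ X U : ℕ → Matrix (Fin n) (Fin n) ℂ,
      IsConjoinedBasis S W nu (fun k => Matrix.fromRows (X k) (U k)) →
      (∀ k, (Matrix.fromRows (X k) (U k))ᴴ * Jmat n * Matrix.fromRows (Xt k) (Ut k) = 1) →
      (∃ k₁ : ℕ, ∀ k, k₁ ≤ k → IsUnit (X k)) ∧
        Filter.Tendsto (fun k => (X k)⁻¹ * Xt k) Filter.atTop (nhds 0)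

/-- The system is eventually controllable: there is `N` such that on any finite subinterval
`{K,…,M}` of `[N,∞)` the only `u` with `0 = ℬₖ u_{k+1}` and `uₖ = 𝒟ₖ u_{k+1}` for all
`k ∈ {K,…,M−1}` is the trivial one. -/
def EventuallyControllable {n : ℕ} (B D : ℕ → Matrix (Fin n) (Fin n) ℂ) : Prop :=
  ∃ N : ℕ, ∀ K M : ℕ, N ≤ K → K < M →
    ∀ u : ℕ → Fin n → ℂ,
      (∀ k, K ≤ k → k < M → B k *ᵥ u (k + 1) = 0 ∧ u k = D k *ᵥ u (k + 1)) →
      ∀ k, K ≤ k → k ≤ M → u k = 0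

/-- The strong Atkinson (definiteness) condition: there are `λ₀ ∈ ℂ` and `a ≤ b` in `ℕ`
such that every solution `z` of `(S_{λ₀})` with `Σ_{k=a}^{b} zₖ*Ψₖzₖ = 0` vanishes
identically. -/
def StrongAtkinson {n : ℕ} (S : ℕ → Matrix (Fin n ⊕ Fin n) (Fin n ⊕ Fin n) ℂ)
    (W : ℕ → Matrix (Fin n) (Fin n) ℂ) : Prop :=
  ∃ (lam0 : ℂ) (a b : ℕ), a ≤ b ∧
    ∀ z : ℕ → (Fin n ⊕ Fin n) → ℂ,
      (∀ k, z k = (S k + lam0 • Vmat S W k) *ᵥ z (k + 1)) →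
      (∑ k ∈ Finset.Icc a b, star (z k) ⬝ᵥ (PsiMat W k *ᵥ z k)) = 0 →
      ∀ k, z k = 0


namespace S19
variable {n : ℕ}

lemma JJ : Jmat n * Jmat n = -1 := by
  rw [show (-1 : Matrix (Fin n ⊕ Fin n) (Fin n ⊕ Fin n) ℂ) = Matrix.fromBlocks (-1) 0 0 (-1) by
    rw [← Matrix.fromBlocks_one, Matrix.fromBlocks_neg]; simp]
  simp [Jmat, Matrix.fromBlocks_multiply]

lemma JH : (Jmat n)ᴴ = -(Jmat n) := by
  rw [Jmat, Matrix.fromBlocks_conjTranspose, Matrix.fromBlocks_neg]; simp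

lemma PJP (W : ℕ → Matrix (Fin n) (Fin n) ℂ) (k : ℕ) :
    PsiMat W k * Jmat n * PsiMat W k = 0 := by
  simp [PsiMat, Jmat, Matrix.fromBlocks_multiply]

lemma PH (W : ℕ → Matrix (Fin n) (Fin n) ℂ) (hW : ∀ k, (W k).PosDef) (k : ℕ) :
    (PsiMat W k)ᴴ = PsiMat W k := by
  simp [PsiMat, Matrix.fromBlocks_conjTranspose, (hW k).1.eq]

lemma isUnit_of_rank_eq (G : Matrix (Fin n) (Fin n) ℂ) (h : G.rank = n) : IsUnit G := by
  rw [← Matrix.mulVec_surjective_iff_isUnit]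
  have hr : LinearMap.range G.mulVecLin = ⊤ := by
    apply Submodule.eq_top_of_finrank_eq
    rw [← Matrix.rank, h]
    simp
  intro v
  obtain ⟨u, hu⟩ := LinearMap.range_eq_top.mp hr v
  exact ⟨u, by simpa using hu⟩

lemma symp (S : ℕ → Matrix (Fin n ⊕ Fin n) (Fin n ⊕ Fin n) ℂ)
    (W : ℕ → Matrix (Fin n) (Fin n) ℂ)
    (hS : ∀ k, (S k)ᴴ * Jmat n * S k = Jmat n) (hW : ∀ k, (W k).PosDef) (nu : ℝ) (k : ℕ) :
    (S k + (nu : ℂ) • Vmat S W k)ᴴ * Jmat n * (S k + (nu : ℂ) • Vmat S W k) = Jmat n := by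
  set J := Jmat n
  set s := S k
  set P := PsiMat W k
  have hVH : (Vmat S W k)ᴴ = sᴴ * P * J := by
    rw [Vmat, conjTranspose_neg, conjTranspose_mul, conjTranspose_mul, JH, PH W hW]
    simp only [Matrix.mul_neg, Matrix.neg_mul, neg_neg]
    rw [Matrix.mul_assoc]
  have hV : Vmat S W k = -(J * P * s) := rfl
  have hc : (star (nu : ℂ)) = (nu : ℂ) := Complex.conj_ofReal nu
  rw [conjTranspose_add, conjTranspose_smul, hc, hVH, hV]
  have e1 : sᴴ * J * s = J := hS k
  have e2 : sᴴ * J * (J * P * s) = -(sᴴ * P * s) := by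
    calc sᴴ * J * (J * P * s) = sᴴ * (J * J) * P * s := by
          simp only [Matrix.mul_assoc]
        _ = -(sᴴ * P * s) := by rw [JJ]; simp [Matrix.mul_assoc]
  have e3 : sᴴ * P * J * J * s = -(sᴴ * P * s) := by
    calc sᴴ * P * J * J * s = sᴴ * P * (J * J) * s := by simp only [Matrix.mul_assoc]
        _ = -(sᴴ * P * s) := by rw [JJ]; simp [Matrix.mul_assoc]
  have e4 : sᴴ * P * J * J * (J * P * s) = 0 := by
    calc sᴴ * P * J * J * (J * P * s) = sᴴ * ((P * (J * J)) * (J * P) * s) := by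
          simp only [Matrix.mul_assoc]
        _ = 0 := by
          rw [JJ]
          have h5 : P * (-1 : Matrix (Fin n ⊕ Fin n) (Fin n ⊕ Fin n) ℂ) * (J * P)
              = -(P * J * P) := by
            simp [Matrix.mul_assoc]
          rw [h5, PJP]
          simp
  have expand : (sᴴ + (nu:ℂ) • (sᴴ * P * J)) * J * (s + (nu:ℂ) • (-(J * P * s)))
      = sᴴ * J * s + ((nu:ℂ) • (sᴴ * P * J * J * s) - (nu:ℂ) • (sᴴ * J * (J * P * s)))
        - (nu:ℂ) • (nu:ℂ) • (sᴴ * P * J * J * (J * P * s)) := by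
    simp only [Matrix.add_mul, Matrix.mul_add, Matrix.smul_mul, Matrix.mul_smul, Matrix.mul_neg,
      Matrix.neg_mul, smul_neg, smul_smul]
    simp only [smul_add, mul_smul]
    abel
  rw [expand, e1, e2, e3, e4]
  simp

noncomputable def sol (M : ℕ → Matrix (Fin n ⊕ Fin n) (Fin n ⊕ Fin n) ℂ)
    (Z0 : Matrix (Fin n ⊕ Fin n) (Fin n) ℂ) : ℕ → Matrix (Fin n ⊕ Fin n) (Fin n) ℂ
  | 0 => Z0
  | k + 1 => (M k)⁻¹ * sol M Z0 k

lemma sol_is_sol (M : ℕ → Matrix (Fin n ⊕ Fin n) (Fin n ⊕ Fin n) ℂ)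
    (Z0 : Matrix (Fin n ⊕ Fin n) (Fin n) ℂ) (hM : ∀ k, IsUnit (M k)) (k : ℕ) :
    sol M Z0 k = M k * sol M Z0 (k + 1) := by
  show sol M Z0 k = M k * ((M k)⁻¹ * sol M Z0 k)
  rw [← Matrix.mul_assoc,
    Matrix.mul_nonsing_inv _ ((Matrix.isUnit_iff_isUnit_det _).mp (hM k)), Matrix.one_mul]

lemma wronskian (M : ℕ → Matrix (Fin n ⊕ Fin n) (Fin n ⊕ Fin n) ℂ)
    (hsymp : ∀ k, (M k)ᴴ * Jmat n * M k = Jmat n)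
    (Y Y' : ℕ → Matrix (Fin n ⊕ Fin n) (Fin n) ℂ)
    (hY : ∀ k, Y k = M k * Y (k + 1)) (hY' : ∀ k, Y' k = M k * Y' (k + 1)) :
    ∀ k, (Y k)ᴴ * Jmat n * Y' k = (Y 0)ᴴ * Jmat n * Y' 0 := by
  intro k
  induction k with
  | zero => rfl
  | succ k ih =>
    rw [← ih]
    conv_rhs => rw [hY k, hY' k]
    rw [show (M k * Y (k + 1))ᴴ * Jmat n * (M k * Y' (k + 1))
        = (Y (k + 1))ᴴ * ((M k)ᴴ * Jmat n * M k) * Y' (k + 1) by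
      simp only [conjTranspose_mul, Matrix.mul_assoc], hsymp k]

lemma negJ : -(Jmat n) = Matrix.fromBlocks 0 (-1) 1 0 := by
  rw [Jmat, Matrix.fromBlocks_neg]; simp

/-- resolution of the identity coming from a symplectic pair -/
lemma resolution (Z ZT : Matrix (Fin n ⊕ Fin n) (Fin n) ℂ)
    (ha : Zᴴ * Jmat n * Z = 0) (hb : Zᴴ * Jmat n * ZT = 1) (hd : ZTᴴ * Jmat n * ZT = 0) :
    ZT * (Zᴴ * Jmat n) - Z * (ZTᴴ * Jmat n) = 1 := by
  have hc : ZTᴴ * Jmat n * Z = -1 := by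
    have h := congrArg Matrix.conjTranspose hb
    rw [Matrix.conjTranspose_mul, Matrix.conjTranspose_mul, Matrix.conjTranspose_one,
      Matrix.conjTranspose_conjTranspose, JH] at h
    have h2 : -(ZTᴴ * Jmat n * Z) = 1 := by
      rw [← h]; simp only [Matrix.mul_neg, Matrix.neg_mul, Matrix.mul_assoc]
    linear_combination (norm := noncomm_ring) -h2
  set Φ := Matrix.fromCols Z ZT with hΦdef
  have hΦH : Φᴴ = Matrix.fromRows Zᴴ ZTᴴ :=
    Matrix.conjTranspose_fromCols_eq_fromRows_conjTranspose Z ZT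
  have hΦ : Φᴴ * Jmat n * Φ = Jmat n := by
    rw [hΦH, Matrix.fromRows_mul, Matrix.fromRows_mul_fromCols, ha, hb, hc, hd, Jmat]
  have hL : ((-(Jmat n)) * Φᴴ * Jmat n) * Φ = 1 := by
    have h6 : ((-(Jmat n)) * Φᴴ * Jmat n) * Φ = -(Jmat n * (Φᴴ * Jmat n * Φ)) := by
      simp only [Matrix.neg_mul, Matrix.mul_assoc]
    rw [h6, hΦ, JJ]; simp
  have hR : Φ * ((-(Jmat n)) * Φᴴ * Jmat n) = 1 := mul_eq_one_comm.mp hL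
  have hcomp : Φ * ((-(Jmat n)) * Φᴴ * Jmat n)
      = (ZT * (Zᴴ * Jmat n) - Z * (ZTᴴ * Jmat n)) := by
    rw [show Φ * ((-(Jmat n)) * Φᴴ * Jmat n) = (Φ * (-(Jmat n))) * Φᴴ * Jmat n by
      simp only [Matrix.mul_assoc], negJ, hΦdef, Matrix.fromCols_mul_fromBlocks]
    simp only [Matrix.mul_zero, Matrix.mul_one, Matrix.mul_neg, zero_add, add_zero]
    rw [hΦH, Matrix.fromCols_mul_fromRows]
    simp only [Matrix.neg_mul, Matrix.add_mul, Matrix.mul_assoc, sub_eq_add_neg]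
  rw [← hcomp, hR]

lemma rank_of_norm (Z ZT : Matrix (Fin n ⊕ Fin n) (Fin n) ℂ)
    (h : Zᴴ * Jmat n * ZT = 1) : Z.rank = n := by
  refine le_antisymm (by simpa using Z.rank_le_card_width) ?_
  have h1 : ((1 : Matrix (Fin n) (Fin n) ℂ)).rank = n := by simp [Matrix.rank_one]
  calc n = ((1 : Matrix (Fin n) (Fin n) ℂ)).rank := h1.symm
    _ = (Zᴴ * (Jmat n * ZT)).rank := by rw [← Matrix.mul_assoc, h]
    _ ≤ Zᴴ.rank := Matrix.rank_mul_le_left _ _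
    _ = Z.rank := Z.rank_conjTranspose

/-- top block of a `2n × n` matrix -/
noncomputable def topB (P : Matrix (Fin n ⊕ Fin n) (Fin n) ℂ) : Matrix (Fin n) (Fin n) ℂ :=
  P.submatrix Sum.inl id

lemma topB_mul (P : Matrix (Fin n ⊕ Fin n) (Fin n) ℂ) (Q : Matrix (Fin n) (Fin n) ℂ) :
    topB (P * Q) = topB P * Q := by
  ext i j; simp [topB, Matrix.mul_apply]

lemma topB_sub (P Q : Matrix (Fin n ⊕ Fin n) (Fin n) ℂ) :
    topB (P - Q) = topB P - topB Q := by
  ext i j; simp [topB]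

lemma topB_fromRows (A B : Matrix (Fin n) (Fin n) ℂ) :
    topB (Matrix.fromRows A B) = A := by
  ext i j; simp [topB]

/-- Construction of a conjoined basis normalized against a given conjoined basis. -/
lemma normalized (M : ℕ → Matrix (Fin n ⊕ Fin n) (Fin n ⊕ Fin n) ℂ)
    (hMu : ∀ k, IsUnit (M k)) (hMsymp : ∀ k, (M k)ᴴ * Jmat n * M k = Jmat n)
    (ZT : ℕ → Matrix (Fin n ⊕ Fin n) (Fin n) ℂ)
    (hsolT : ∀ k, ZT k = M k * ZT (k + 1))
    (hrk : (ZT 0).rank = n) (hom : (ZT 0)ᴴ * Jmat n * ZT 0 = 0) :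
    ∃ Z : ℕ → Matrix (Fin n ⊕ Fin n) (Fin n) ℂ,
      (∀ k, Z k = M k * Z (k + 1)) ∧
      (∀ k, (Z k)ᴴ * Jmat n * Z k = 0) ∧
      (∀ k, (Z k)ᴴ * Jmat n * ZT k = 1) ∧
      (∀ k, (Z k).rank = n) := by
  set G := (ZT 0)ᴴ * ZT 0 with hG
  have hGu : IsUnit G := isUnit_of_rank_eq _
    (by rw [hG, Matrix.rank_conjTranspose_mul_self, hrk])
  have hGdet : IsUnit G.det := (Matrix.isUnit_iff_isUnit_det _).mp hGu
  have hGH : Gᴴ = G := by rw [hG]; simp [Matrix.conjTranspose_mul]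
  have hGiH : (G⁻¹)ᴴ = G⁻¹ := by rw [Matrix.conjTranspose_nonsing_inv, hGH]
  set Z0 := Jmat n * ZT 0 * G⁻¹ with hZ0
  have hZ0H : Z0ᴴ = G⁻¹ * ((ZT 0)ᴴ * (-(Jmat n))) := by
    rw [hZ0, Matrix.conjTranspose_mul, Matrix.conjTranspose_mul, hGiH, JH]
  have e1 : Z0ᴴ * Jmat n * ZT 0 = 1 := by
    rw [hZ0H]
    have h1 : G⁻¹ * ((ZT 0)ᴴ * (-(Jmat n))) * Jmat n * ZT 0
        = -(G⁻¹ * ((ZT 0)ᴴ * (Jmat n * (Jmat n * ZT 0)))) := by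
      simp only [Matrix.neg_mul, Matrix.mul_neg, Matrix.mul_assoc]
    rw [h1]
    have h2 : Jmat n * (Jmat n * ZT 0) = -(ZT 0) := by
      rw [← Matrix.mul_assoc, JJ]; simp
    rw [h2, Matrix.mul_neg, Matrix.mul_neg, neg_neg, ← hG]
    exact Matrix.nonsing_inv_mul _ hGdet
  have e0 : Z0ᴴ * Jmat n * Z0 = 0 := by
    rw [hZ0H, hZ0]
    have h1 : G⁻¹ * ((ZT 0)ᴴ * (-(Jmat n))) * Jmat n * (Jmat n * ZT 0 * G⁻¹)
        = -(G⁻¹ * ((ZT 0)ᴴ * (Jmat n * (Jmat n * (Jmat n * (ZT 0 * G⁻¹)))))) := by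
      simp only [Matrix.neg_mul, Matrix.mul_neg, Matrix.mul_assoc]
    rw [h1]
    have h2 : Jmat n * (Jmat n * (Jmat n * (ZT 0 * G⁻¹)))
        = -(Jmat n * (ZT 0 * G⁻¹)) := by
      rw [← Matrix.mul_assoc (Jmat n) (Jmat n), JJ]; simp
    rw [h2, Matrix.mul_neg, Matrix.mul_neg, neg_neg]
    have h3 : (ZT 0)ᴴ * (Jmat n * (ZT 0 * G⁻¹)) = ((ZT 0)ᴴ * Jmat n * ZT 0) * G⁻¹ := by
      simp only [Matrix.mul_assoc]
    rw [h3, hom]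
    simp
  refine ⟨sol M Z0, fun k => sol_is_sol M Z0 hMu k, fun k => ?_, fun k => ?_, fun k => ?_⟩
  · rw [wronskian M hMsymp (sol M Z0) (sol M Z0) (fun k => sol_is_sol M Z0 hMu k)
      (fun k => sol_is_sol M Z0 hMu k) k]
    exact e0
  · rw [wronskian M hMsymp (sol M Z0) ZT (fun k => sol_is_sol M Z0 hMu k) hsolT k]
    exact e1
  · exact rank_of_norm _ (ZT k)
      (by rw [wronskian M hMsymp (sol M Z0) ZT (fun k => sol_is_sol M Z0 hMu k) hsolT k]; exact e1)

end S19

/-- Uniqueness of the recessive solution: any two recessive solutions of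
`(S_ν)` differ by a constant nonsingular right factor. -/
theorem statement19 {n : ℕ} (hn : 1 ≤ n)
    (S : ℕ → Matrix (Fin n ⊕ Fin n) (Fin n ⊕ Fin n) ℂ)
    (A B C D W : ℕ → Matrix (Fin n) (Fin n) ℂ)
    (hS : ∀ k, (S k)ᴴ * Jmat n * S k = Jmat n)
    (hblocks : ∀ k, S k = Matrix.fromBlocks (A k) (B k) (C k) (D k))
    (hW : ∀ k, (W k).PosDef)
    (nu : ℝ) (Xt Ut Xt' Ut' : ℕ → Matrix (Fin n) (Fin n) ℂ)
    (hrec : IsRecessive S W B nu Xt Ut)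
    (hrec' : IsRecessive S W B nu Xt' Ut') :
    ∃ K : Matrix (Fin n) (Fin n) ℂ, IsUnit K ∧
      ∀ k, Matrix.fromRows (Xt' k) (Ut' k) = Matrix.fromRows (Xt k) (Ut k) * K := by
  classical
  obtain ⟨hcbT, ⟨k₀, hk₀⟩, hlimT⟩ := hrec
  obtain ⟨hcbT', ⟨k₀', hk₀'⟩, hlimT'⟩ := hrec'
  obtain ⟨hsolT, hprT⟩ := hcbT
  obtain ⟨hsolT', hprT'⟩ := hcbT'
  set M : ℕ → Matrix (Fin n ⊕ Fin n) (Fin n ⊕ Fin n) ℂ :=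
    fun k => S k + (nu : ℂ) • Vmat S W k with hMdef
  have hMsymp : ∀ k, (M k)ᴴ * Jmat n * M k = Jmat n := fun k => S19.symp S W hS hW nu k
  have hMu : ∀ k, IsUnit (M k) := by
    intro k
    have h1 : (-(Jmat n) * (M k)ᴴ * Jmat n) * M k = -(Jmat n * ((M k)ᴴ * Jmat n * M k)) := by
      simp only [Matrix.neg_mul, Matrix.mul_assoc]
    rw [hMsymp k, S19.JJ, neg_neg] at h1
    exact (Matrix.isUnit_iff_isUnit_det _).mpr (Matrix.isUnit_det_of_left_inverse h1)
  have hTT : ∀ k, (Matrix.fromRows (Xt k) (Ut k))ᴴ * Jmat n * Matrix.fromRows (Xt k) (Ut k)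
      = 0 := fun k => (hprT k).2
  have hTT' : ∀ k, (Matrix.fromRows (Xt' k) (Ut' k))ᴴ * Jmat n * Matrix.fromRows (Xt' k) (Ut' k)
      = 0 := fun k => (hprT' k).2
  obtain ⟨Z, hZsol, hZZ, hZT1, hZrank⟩ := S19.normalized M hMu hMsymp
      (fun k => Matrix.fromRows (Xt k) (Ut k)) hsolT (hprT 0).1 (hTT 0)
  obtain ⟨Z', hZ'sol, hZ'Z', hZ'T1, hZ'rank⟩ := S19.normalized M hMu hMsymp
      (fun k => Matrix.fromRows (Xt' k) (Ut' k)) hsolT' (hprT' 0).1 (hTT' 0)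
  set X : ℕ → Matrix (Fin n) (Fin n) ℂ := fun k => S19.topB (Z k) with hX
  set U : ℕ → Matrix (Fin n) (Fin n) ℂ := fun k => (Z k).submatrix Sum.inr id with hU
  set X' : ℕ → Matrix (Fin n) (Fin n) ℂ := fun k => S19.topB (Z' k) with hX'
  set U' : ℕ → Matrix (Fin n) (Fin n) ℂ := fun k => (Z' k).submatrix Sum.inr id with hU'
  have hfr : ∀ k, Matrix.fromRows (X k) (U k) = Z k := by
    intro k; ext i j; cases i <;> rfl
  have hfr' : ∀ k, Matrix.fromRows (X' k) (U' k) = Z' k := by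
    intro k; ext i j; cases i <;> rfl
  have hcbX : IsConjoinedBasis S W nu (fun k => Matrix.fromRows (X k) (U k)) := by
    refine ⟨fun k => ?_, fun k => ⟨?_, ?_⟩⟩
    · show Matrix.fromRows (X k) (U k) = M k * Matrix.fromRows (X (k + 1)) (U (k + 1))
      rw [hfr k, hfr (k + 1)]; exact hZsol k
    · show (Matrix.fromRows (X k) (U k)).rank = n
      rw [hfr k]; exact hZrank k
    · show (Matrix.fromRows (X k) (U k))ᴴ * Jmat n * Matrix.fromRows (X k) (U k) = 0
      rw [hfr k]; exact hZZ k
  have hcbX' : IsConjoinedBasis S W nu (fun k => Matrix.fromRows (X' k) (U' k)) := by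
    refine ⟨fun k => ?_, fun k => ⟨?_, ?_⟩⟩
    · show Matrix.fromRows (X' k) (U' k) = M k * Matrix.fromRows (X' (k + 1)) (U' (k + 1))
      rw [hfr' k, hfr' (k + 1)]; exact hZ'sol k
    · show (Matrix.fromRows (X' k) (U' k)).rank = n
      rw [hfr' k]; exact hZ'rank k
    · show (Matrix.fromRows (X' k) (U' k))ᴴ * Jmat n * Matrix.fromRows (X' k) (U' k) = 0
      rw [hfr' k]; exact hZ'Z' k
  have hnormX : ∀ k, (Matrix.fromRows (X k) (U k))ᴴ * Jmat n
      * Matrix.fromRows (Xt k) (Ut k) = 1 := by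
    intro k; rw [hfr k]; exact hZT1 k
  have hnormX' : ∀ k, (Matrix.fromRows (X' k) (U' k))ᴴ * Jmat n
      * Matrix.fromRows (Xt' k) (Ut' k) = 1 := by
    intro k; rw [hfr' k]; exact hZ'T1 k
  obtain ⟨⟨k₁, hk₁⟩, hE⟩ := hlimT X U hcbX hnormX
  obtain ⟨⟨k₁', hk₁'⟩, hF⟩ := hlimT' X' U' hcbX' hnormX'
  -- expansion of the second recessive solution in the normalized pair (Z, Z̃)
  obtain ⟨NN, MM, hexpT'⟩ : ∃ NN MM : Matrix (Fin n) (Fin n) ℂ, ∀ k, Matrix.fromRows (Xt' k) (Ut' k)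
      = Matrix.fromRows (Xt k) (Ut k) * NN - Z k * MM := by
    refine ⟨(Z 0)ᴴ * Jmat n * Matrix.fromRows (Xt' 0) (Ut' 0),
      (Matrix.fromRows (Xt 0) (Ut 0))ᴴ * Jmat n * Matrix.fromRows (Xt' 0) (Ut' 0),
      fun k => ?_⟩
    have hresk := S19.resolution (Z k) (Matrix.fromRows (Xt k) (Ut k)) (hZZ k) (hZT1 k) (hTT k)
    have w1 := S19.wronskian M hMsymp Z (fun k => Matrix.fromRows (Xt' k) (Ut' k))
      hZsol hsolT' k
    have w2 := S19.wronskian M hMsymp (fun k => Matrix.fromRows (Xt k) (Ut k))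
      (fun k => Matrix.fromRows (Xt' k) (Ut' k)) hsolT hsolT' k
    calc Matrix.fromRows (Xt' k) (Ut' k)
        = 1 * Matrix.fromRows (Xt' k) (Ut' k) := (Matrix.one_mul _).symm
      _ = (Matrix.fromRows (Xt k) (Ut k) * ((Z k)ᴴ * Jmat n)
            - Z k * ((Matrix.fromRows (Xt k) (Ut k))ᴴ * Jmat n))
            * Matrix.fromRows (Xt' k) (Ut' k) := by rw [hresk]
      _ = Matrix.fromRows (Xt k) (Ut k)
            * ((Z k)ᴴ * Jmat n * Matrix.fromRows (Xt' k) (Ut' k))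
            - Z k * ((Matrix.fromRows (Xt k) (Ut k))ᴴ * Jmat n
              * Matrix.fromRows (Xt' k) (Ut' k)) := by
          simp only [Matrix.sub_mul, Matrix.mul_assoc]
      _ = _ := by rw [w1, w2]
  -- expansion of Z' in the normalized pair (Z, Z̃)
  obtain ⟨N₃, M₃, hexpZ'⟩ : ∃ N₃ M₃ : Matrix (Fin n) (Fin n) ℂ, ∀ k, Z' k
      = Matrix.fromRows (Xt k) (Ut k) * N₃ - Z k * M₃ := by
    refine ⟨(Z 0)ᴴ * Jmat n * Z' 0,
      (Matrix.fromRows (Xt 0) (Ut 0))ᴴ * Jmat n * Z' 0, fun k => ?_⟩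
    have hresk := S19.resolution (Z k) (Matrix.fromRows (Xt k) (Ut k)) (hZZ k) (hZT1 k) (hTT k)
    have w1 := S19.wronskian M hMsymp Z Z' hZsol hZ'sol k
    have w2 := S19.wronskian M hMsymp (fun k => Matrix.fromRows (Xt k) (Ut k)) Z'
      hsolT hZ'sol k
    calc Z' k = 1 * Z' k := (Matrix.one_mul _).symm
      _ = (Matrix.fromRows (Xt k) (Ut k) * ((Z k)ᴴ * Jmat n)
            - Z k * ((Matrix.fromRows (Xt k) (Ut k))ᴴ * Jmat n)) * Z' k := by rw [hresk]
      _ = Matrix.fromRows (Xt k) (Ut k) * ((Z k)ᴴ * Jmat n * Z' k)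
            - Z k * ((Matrix.fromRows (Xt k) (Ut k))ᴴ * Jmat n * Z' k) := by
          simp only [Matrix.sub_mul, Matrix.mul_assoc]
      _ = _ := by rw [w1, w2]
  -- top blocks of the expansions
  have hXt'eq : ∀ k, Xt' k = Xt k * NN - X k * MM := by
    intro k
    have h := congrArg S19.topB (hexpT' k)
    rw [S19.topB_sub, S19.topB_mul, S19.topB_mul, S19.topB_fromRows, S19.topB_fromRows] at h
    exact h
  have hX'eq : ∀ k, X' k = Xt k * N₃ - X k * M₃ := by
    intro k
    have h := congrArg S19.topB (hexpZ' k)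
    rw [S19.topB_sub, S19.topB_mul, S19.topB_mul, S19.topB_fromRows] at h
    exact h
  -- limit argument: MM = 0
  have hXdet : ∀ k, k₁ ≤ k → IsUnit (X k).det :=
    fun k hk => (Matrix.isUnit_iff_isUnit_det _).mp (hk₁ k hk)
  have hX'det : ∀ k, k₁' ≤ k → IsUnit (X' k).det :=
    fun k hk => (Matrix.isUnit_iff_isUnit_det _).mp (hk₁' k hk)
  have hkey : ∀ k, max k₁ k₁' ≤ k →
      (X k)⁻¹ * Xt k * NN - MM = ((X k)⁻¹ * Xt k * N₃ - M₃) * ((X' k)⁻¹ * Xt' k) := by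
    intro k hk
    have hXd := hXdet k (le_trans (le_max_left _ _) hk)
    have hX'd := hX'det k (le_trans (le_max_right _ _) hk)
    have l1 : (X k)⁻¹ * Xt' k = (X k)⁻¹ * Xt k * NN - MM := by
      rw [hXt'eq k, Matrix.mul_sub, ← Matrix.mul_assoc, ← Matrix.mul_assoc,
        Matrix.nonsing_inv_mul _ hXd, Matrix.one_mul]
    have l2 : (X k)⁻¹ * X' k = (X k)⁻¹ * Xt k * N₃ - M₃ := by
      rw [hX'eq k, Matrix.mul_sub, ← Matrix.mul_assoc, ← Matrix.mul_assoc,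
        Matrix.nonsing_inv_mul _ hXd, Matrix.one_mul]
    have l3 : (X k)⁻¹ * Xt' k = ((X k)⁻¹ * X' k) * ((X' k)⁻¹ * Xt' k) := by
      calc (X k)⁻¹ * Xt' k = (X k)⁻¹ * ((X' k * (X' k)⁻¹) * Xt' k) := by
            rw [Matrix.mul_nonsing_inv _ hX'd, Matrix.one_mul]
        _ = ((X k)⁻¹ * X' k) * ((X' k)⁻¹ * Xt' k) := by simp only [Matrix.mul_assoc]
    rw [← l1, l3, l2]
  have h1lim : Filter.Tendsto (fun k => (X k)⁻¹ * Xt k * NN - MM) Filter.atTop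
      (nhds ((0 : Matrix (Fin n) (Fin n) ℂ) * NN - MM)) :=
    (hE.mul_const NN).sub tendsto_const_nhds
  have h2lim : Filter.Tendsto (fun k => ((X k)⁻¹ * Xt k * N₃ - M₃) * ((X' k)⁻¹ * Xt' k))
      Filter.atTop (nhds (((0 : Matrix (Fin n) (Fin n) ℂ) * N₃ - M₃) * 0)) :=
    ((hE.mul_const N₃).sub tendsto_const_nhds).mul hF
  have hev : (fun k => (X k)⁻¹ * Xt k * NN - MM)
      =ᶠ[Filter.atTop] (fun k => ((X k)⁻¹ * Xt k * N₃ - M₃) * ((X' k)⁻¹ * Xt' k)) :=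
    Filter.eventually_atTop.mpr ⟨max k₁ k₁', hkey⟩
  have huniq := tendsto_nhds_unique h1lim (h2lim.congr' hev.symm)
  have hMM0 : MM = 0 := by
    have h7 := huniq
    simp only [Matrix.zero_mul, zero_sub, Matrix.mul_zero] at h7
    exact neg_eq_zero.mp h7
  have hfinal : ∀ k, Matrix.fromRows (Xt' k) (Ut' k) = Matrix.fromRows (Xt k) (Ut k) * NN := by
    intro k; rw [hexpT' k, hMM0, Matrix.mul_zero, sub_zero]
  have hXtu : IsUnit (Xt (max k₀ k₀')) := (hk₀ _ (le_max_left _ _)).1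
  have hXt'u : IsUnit (Xt' (max k₀ k₀')) := (hk₀' _ (le_max_right _ _)).1
  have htop : Xt' (max k₀ k₀') = Xt (max k₀ k₀') * NN := by
    have h := congrArg S19.topB (hfinal (max k₀ k₀'))
    rwa [S19.topB_fromRows, S19.topB_mul, S19.topB_fromRows] at h
  have hNNu : IsUnit NN := by
    have hd : IsUnit ((Xt (max k₀ k₀')).det * NN.det) := by
      rw [← Matrix.det_mul, ← htop]
      exact (Matrix.isUnit_iff_isUnit_det _).mp hXt'u
    exact (Matrix.isUnit_iff_isUnit_det _).mpr (isUnit_of_mul_isUnit_right hd)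
  exact ⟨NN, hNNu, hfinal⟩
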